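/- Let N ≥ 3 and suppose w : ℝᴺ → ℝ is a positive C² function satisfying -Δw + εw ≥ 0 on {|x| ≥ 1} for some ε > 0, and w is continuous. Then there exists c > 0 such that w(x) ≥ c |x|^{-(N-2)} exp(-√ε |x|) for all |x| ≥ 1. -/

import Mathlib

set_option maxHeartbeats 1000000
open Real Filter

variable (m k : ℝ)

noncomputable def phi (r : ℝ) : ℝ := r ^ (-m) * Real.exp (-(k * r))
noncomputable def phid (r : ℝ) : ℝ := -(m / r + k) * phi m k r
noncomputable def phidd (r : ℝ) : ℝ := ((m / r + k) ^ 2 + m / r ^ 2) * phi m k r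

theorem phi_pos {r : ℝ} (hr : 0 < r) : 0 < phi m k r := by
  unfold phi; positivity

theorem hasDerivAt_phi {r : ℝ} (hr : 0 < r) : HasDerivAt (phi m k) (phid m k r) r := by
  have h1 : HasDerivAt (fun r : ℝ => r ^ (-m)) (-m * r ^ (-m - 1)) r :=
    Real.hasDerivAt_rpow_const (Or.inl hr.ne')
  have h2 : HasDerivAt (fun r : ℝ => Real.exp (-(k * r))) (Real.exp (-(k * r)) * (-k)) r := by
    have : HasDerivAt (fun r : ℝ => -(k * r)) (-k) r := by
      exact ((hasDerivAt_id' r).const_mul k).neg.congr_deriv (by ring)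
    exact (Real.hasDerivAt_exp _).comp r this
  have := h1.mul h2
  refine this.congr_deriv ?_
  unfold phid phi
  have hrm : r ^ (-m - 1) = r ^ (-m) / r := by
    rw [Real.rpow_sub hr, Real.rpow_one]
  rw [hrm]
  field_simp
  ring

theorem hasDerivAt_phid {r : ℝ} (hr : 0 < r) : HasDerivAt (phid m k) (phidd m k r) r := by
  have h1 : HasDerivAt (fun r : ℝ => -(m / r + k)) (m / r ^ 2) r := by
    have : HasDerivAt (fun r : ℝ => m / r) (-(m / r ^ 2)) r := by
      simpa [div_eq_mul_inv, pow_two, mul_inv] using ((hasDerivAt_inv hr.ne').const_mul m)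
    exact (this.add_const k).neg.congr_deriv (neg_neg _)
  have := h1.mul (hasDerivAt_phi m k hr)
  refine this.congr_deriv ?_
  unfold phidd phid
  ring

noncomputable def gg (s : ℝ) : ℝ := phi m k (Real.sqrt s)
noncomputable def ggd (s : ℝ) : ℝ := phid m k (Real.sqrt s) / (2 * Real.sqrt s)
noncomputable def ggdd (s : ℝ) : ℝ :=
  phidd m k (Real.sqrt s) / (4 * s) - phid m k (Real.sqrt s) / (4 * s * Real.sqrt s)

theorem hasDerivAt_gg {s : ℝ} (hs : 0 < s) : HasDerivAt (gg m k) (ggd m k s) s := by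
  have hsq : 0 < Real.sqrt s := Real.sqrt_pos.mpr hs
  have h := (hasDerivAt_phi m k hsq).comp s (Real.hasDerivAt_sqrt hs.ne')
  refine h.congr_deriv ?_
  unfold ggd; simp [div_eq_mul_inv]; try ring

theorem hasDerivAt_ggd {s : ℝ} (hs : 0 < s) : HasDerivAt (ggd m k) (ggdd m k s) s := by
  have hsq : 0 < Real.sqrt s := Real.sqrt_pos.mpr hs
  have h1 := (hasDerivAt_phid m k hsq).comp s (Real.hasDerivAt_sqrt hs.ne')
  have h2 := ((Real.hasDerivAt_sqrt hs.ne').const_mul 2).inv (by positivity : 2 * Real.sqrt s ≠ 0)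
  have hmul := h1.mul h2
  have heq : (ggd m k) = fun s => (phid m k (Real.sqrt s)) * (2 * Real.sqrt s)⁻¹ := by
    funext t; unfold ggd; rw [div_eq_mul_inv]
  rw [heq]
  refine hmul.congr_deriv ?_
  unfold ggdd
  simp only [Pi.inv_apply, Function.comp_apply]
  set u := Real.sqrt s with hu
  have hu2 : s = u ^ 2 := (Real.sq_sqrt hs.le).symm
  rw [hu2]
  have hu0 : u ≠ 0 := ne_of_gt hsq
  field_simp
  ring

theorem key_ineq {N : ℕ} (hN : 3 ≤ N) {r ε : ℝ} (hr : 1 ≤ r) (hε : 0 < ε)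
    (hm : m = (N : ℝ) - 2) (hk : k = Real.sqrt ε) :
    ε * phi m k r ≤ phidd m k r + ((N : ℝ) - 1) * phid m k r / r := by
  have hr0 : 0 < r := lt_of_lt_of_le one_pos hr
  have hφ : 0 < phi m k r := phi_pos m k hr0
  have hk0 : 0 ≤ k := hk ▸ Real.sqrt_nonneg ε
  have hk2 : k ^ 2 = ε := by rw [hk, Real.sq_sqrt hε.le]
  have hN3 : (3 : ℝ) ≤ (N : ℝ) := by exact_mod_cast hN
  unfold phidd phid
  have expand : ((m / r + k) ^ 2 + m / r ^ 2) * phi m k r +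
      ((N : ℝ) - 1) * (-(m / r + k) * phi m k r) / r
      = (k ^ 2 + ((N : ℝ) - 3) * k / r) * phi m k r := by
    rw [hm]; field_simp; ring
  rw [expand, hk2]
  have : 0 ≤ ((N : ℝ) - 3) * k / r := div_nonneg (mul_nonneg (by linarith) hk0) hr0.le
  nlinarith

variable {N : ℕ}
local notation "E" => EuclideanSpace ℝ (Fin N)

noncomputable def qq (x : E) : ℝ := ∑ i, x i ^ 2

theorem qq_eq_norm (x : E) : qq x = ‖x‖ ^ 2 := by
  rw [EuclideanSpace.norm_eq, Real.sq_sqrt (by positivity)]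
  unfold qq
  simp [Real.norm_eq_abs, sq_abs]

noncomputable def LL (x : E) : E →L[ℝ] ℝ := ∑ i, (2 * x i) • EuclideanSpace.proj i

theorem hasFDerivAt_qq (x : E) : HasFDerivAt qq (LL x) x := by
  have h : ∀ i : Fin N, HasFDerivAt (fun y : E => y i ^ 2)
      ((2 * x i) • (EuclideanSpace.proj i : E →L[ℝ] ℝ)) x := by
    intro i
    have h1 : HasFDerivAt (fun y : E => y i) (EuclideanSpace.proj i : E →L[ℝ] ℝ) x := by
      exact (EuclideanSpace.proj i : (EuclideanSpace ℝ (Fin N)) →L[ℝ] ℝ).hasFDerivAt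
    have h2 := h1.mul h1
    have h3 : (fun y : E => y i ^ 2) = fun y : E => y i * y i := by funext y; ring
    rw [h3, two_mul, add_smul]
    exact h2
  have := HasFDerivAt.sum (fun i (_ : i ∈ Finset.univ) => h i)
  have hq : (qq : E → ℝ) = ∑ i, (fun y : E => y i ^ 2) := by
    funext y; simp [qq, Finset.sum_apply]
  rw [hq]; exact this

theorem LL_single (x : E) (i : Fin N) : LL x (EuclideanSpace.single i 1) = 2 * x i := by
  unfold LL
  simp [EuclideanSpace.single_apply, Finset.sum_ite_eq]

variable (m k : ℝ)

noncomputable def FF (x : E) : ℝ := gg m k (qq x)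
noncomputable def Phi (i : Fin N) (y : E) : ℝ := ggd m k (qq y) * (2 * y i)

theorem sqrt_qq (x : E) : Real.sqrt (qq x) = ‖x‖ := by
  rw [qq_eq_norm, Real.sqrt_sq (norm_nonneg x)]

theorem FF_val (x : E) : FF m k x = phi m k ‖x‖ := by
  unfold FF gg; rw [sqrt_qq]

theorem hasFDerivAt_FF {x : E} (hx : 0 < qq x) :
    HasFDerivAt (FF m k) (ggd m k (qq x) • LL x) x :=
  (hasDerivAt_gg m k hx).comp_hasFDerivAt x (hasFDerivAt_qq x)

theorem hasFDerivAt_Phi (i : Fin N) {x : E} (hx : 0 < qq x) :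
    HasFDerivAt (Phi m k i)
      ((ggd m k (qq x)) • ((2:ℝ) • (EuclideanSpace.proj i : E →L[ℝ] ℝ))
        + (2 * x i) • (ggdd m k (qq x) • LL x)) x := by
  have h1 : HasFDerivAt (fun y : E => ggd m k (qq y)) (ggdd m k (qq x) • LL x) x :=
    (hasDerivAt_ggd m k hx).comp_hasFDerivAt x (hasFDerivAt_qq x)
  have h2 : HasFDerivAt (fun y : E => 2 * y i)
      ((2:ℝ) • (EuclideanSpace.proj i : E →L[ℝ] ℝ)) x := by
    exact ((EuclideanSpace.proj i : E →L[ℝ] ℝ).hasFDerivAt).const_mul 2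
  exact h1.mul h2

theorem sum_B {x : E} (hx : 1 ≤ ‖x‖) :
    ∑ i : Fin N, ((ggd m k (qq x)) • ((2:ℝ) • (EuclideanSpace.proj i : E →L[ℝ] ℝ))
        + (2 * x i) • (ggdd m k (qq x) • LL x)) (EuclideanSpace.single i 1)
      = phidd m k ‖x‖ + ((N:ℝ) - 1) * phid m k ‖x‖ / ‖x‖ := by
  have hr1 : (1:ℝ) ≤ ‖x‖ := hx
  have hr0 : (0:ℝ) < ‖x‖ := lt_of_lt_of_le one_pos hr1
  have hs : qq x = ‖x‖ ^ 2 := qq_eq_norm x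
  have hsqrt : Real.sqrt (qq x) = ‖x‖ := sqrt_qq x
  have hterm : ∀ i : Fin N, ((ggd m k (qq x)) • ((2:ℝ) • (EuclideanSpace.proj i : E →L[ℝ] ℝ))
        + (2 * x i) • (ggdd m k (qq x) • LL x)) (EuclideanSpace.single i 1)
      = ggd m k (qq x) * 2 + ggdd m k (qq x) * (2 * x i) * (2 * x i) := by
    intro i
    simp only [ContinuousLinearMap.add_apply, ContinuousLinearMap.smul_apply, smul_eq_mul,
      LL_single]
    have : (EuclideanSpace.proj i : E →L[ℝ] ℝ) (EuclideanSpace.single i 1) = 1 := by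
      simp [EuclideanSpace.single_apply]
    rw [this]
    ring
  rw [Finset.sum_congr rfl (fun i _ => hterm i)]
  rw [Finset.sum_add_distrib, Finset.sum_const, Finset.card_univ, Fintype.card_fin]
  have hsum2 : ∑ i : Fin N, ggdd m k (qq x) * (2 * x i) * (2 * x i)
      = ggdd m k (qq x) * (4 * qq x) := by
    rw [Finset.sum_congr rfl (fun i _ => by ring :
      ∀ i ∈ Finset.univ, ggdd m k (qq x) * (2 * x i) * (2 * x i)
        = (4 * ggdd m k (qq x)) * (x i ^ 2)), ← Finset.mul_sum]
    unfold qq; ring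
  rw [hsum2, nsmul_eq_mul]
  unfold ggd ggdd
  rw [hs, Real.sqrt_sq (norm_nonneg x)]
  have hne : ‖x‖ ≠ 0 := ne_of_gt hr0
  field_simp
  ring

theorem secondDeriv_nonneg_of_isLocalMin {u u' : ℝ → ℝ} {a L : ℝ}
    (hmin : IsLocalMin u a)
    (hd : ∀ᶠ t in nhds a, HasDerivAt u (u' t) t)
    (hd2 : HasDerivAt u' L a) : 0 ≤ L := by
  by_contra hL
  push_neg at hL
  have hu'a : u' a = 0 := hmin.hasDerivAt_eq_zero hd.self_of_nhds
  have hslope : Tendsto (fun t => (u' t - u' a) / (t - a)) (nhdsWithin a {a}ᶜ) (nhds L) := by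
    have := hasDerivAt_iff_tendsto_slope.mp hd2
    exact Tendsto.congr (fun t => slope_def_field u' a t) this
  have hneg : ∀ᶠ t in nhdsWithin a (Set.Ioi a), u' t < 0 := by
    have h1 : ∀ᶠ t in nhdsWithin a {a}ᶜ, (u' t - u' a) / (t - a) < L / 2 := by
      apply hslope.eventually_lt_const; linarith
    have h2 := nhdsWithin_mono a (by intro t ht; exact ne_of_gt ht : Set.Ioi a ⊆ {a}ᶜ) h1
    filter_upwards [h2, self_mem_nhdsWithin] with t ht hta
    have hta' : 0 < t - a := sub_pos.mpr hta
    rw [hu'a, sub_zero] at ht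
    have := (div_lt_iff₀ hta').mp ht
    nlinarith
  obtain ⟨δ1, hδ1, hP1⟩ := Metric.eventually_nhds_iff.mp (hd.and hmin)
  rw [eventually_nhdsWithin_iff] at hneg
  obtain ⟨δ2, hδ2, hP2⟩ := Metric.eventually_nhds_iff.mp hneg
  set δ := min δ1 δ2 with hδdef
  have hδ : 0 < δ := lt_min hδ1 hδ2
  set t := a + δ/2 with ht
  have hta : a < t := by simp [ht]; linarith
  have hsub : ∀ s ∈ Set.Icc a t, HasDerivAt u (u' s) s ∧ u a ≤ u s := by
    intro s hs
    apply hP1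
    rw [Real.dist_eq, abs_sub_lt_iff]
    constructor
    · have := hs.2; have : s - a ≤ δ/2 := by simp [ht] at this ⊢; linarith
      have : δ ≤ δ1 := min_le_left _ _
      linarith
    · have := hs.1; have : δ ≤ δ1 := min_le_left _ _; linarith
  obtain ⟨ξ, hξ, hξ2⟩ := exists_hasDerivAt_eq_slope u u' hta
    (fun s hs => (hsub s hs).1.continuousAt.continuousWithinAt)
    (fun s hs => (hsub s ⟨hs.1.le, hs.2.le⟩).1)
  have hξneg : u' ξ < 0 := by
    apply hP2
    · rw [Real.dist_eq, abs_sub_lt_iff]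
      have h2 : δ ≤ δ2 := min_le_right _ _
      have := hξ.2; have := hξ.1
      constructor
      · simp only [ht] at *; linarith
      · linarith
    · exact hξ.1
  have hut : u a ≤ u t := (hsub t ⟨hta.le, le_refl _⟩).2
  rw [hξ2] at hξneg
  have : 0 < t - a := sub_pos.mpr hta
  have := div_neg_iff.mp hξneg
  rcases this with ⟨h1, h2⟩ | ⟨h1, h2⟩ <;> linarith

open Real Filter

theorem lower_barrier (N : ℕ) (hN : 3 ≤ N) (ε : ℝ) (hε : 0 < ε)
    (w : EuclideanSpace ℝ (Fin N) → ℝ) (hw : ContDiff ℝ 2 w)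
    (hcont : Continuous w) (hpos : ∀ x, 0 < w x)
    (hsuper : ∀ x : EuclideanSpace ℝ (Fin N), 1 ≤ ‖x‖ →
      0 ≤ -(∑ i : Fin N, fderiv ℝ (fun y => fderiv ℝ w y (EuclideanSpace.single i 1)) x
        (EuclideanSpace.single i 1)) + ε * w x) :
    ∃ c : ℝ, 0 < c ∧ ∀ x : EuclideanSpace ℝ (Fin N), 1 ≤ ‖x‖ →
      c * ‖x‖ ^ (-((N : ℝ) - 2)) * Real.exp (-(Real.sqrt ε * ‖x‖)) ≤ w x := by
  classical
  set m : ℝ := (N : ℝ) - 2 with hmdef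
  set k : ℝ := Real.sqrt ε with hkdef
  have hk0 : 0 ≤ k := Real.sqrt_nonneg ε
  have hN3 : (3 : ℝ) ≤ (N : ℝ) := by exact_mod_cast hN
  have hm1 : 1 ≤ m := by rw [hmdef]; linarith
  have hm0 : 0 < m := by linarith
  -- minimum of w on the unit sphere
  have hsphere : (Metric.sphere (0 : EuclideanSpace ℝ (Fin N)) 1).Nonempty := by
    refine ⟨EuclideanSpace.single (⟨0, by omega⟩ : Fin N) 1, ?_⟩
    simp [EuclideanSpace.norm_single]
  obtain ⟨x1, hx1mem, hx1min⟩ :=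
    (isCompact_sphere (0 : EuclideanSpace ℝ (Fin N)) 1).exists_isMinOn hsphere hcont.continuousOn
  set c : ℝ := w x1 * Real.exp k with hcdef
  have hc0 : 0 < c := mul_pos (hpos x1) (Real.exp_pos k)
  have hcphi1 : c * phi m k 1 = w x1 := by
    unfold phi
    rw [Real.one_rpow, mul_one, hcdef]
    rw [one_mul, mul_assoc, ← Real.exp_add]
    simp
  have hq0 : ∀ y : EuclideanSpace ℝ (Fin N), 1 ≤ ‖y‖ → 0 < qq y := by
    intro y hy
    rw [qq_eq_norm]
    nlinarith
  -- the main claim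
  have key : ∀ x : EuclideanSpace ℝ (Fin N), 1 ≤ ‖x‖ → c * phi m k ‖x‖ ≤ w x := by
    intro x hx
    have claim : ∀ R : ℝ, max ‖x‖ 2 ≤ R →
        -(c * phi m k R) ≤ w x - c * phi m k ‖x‖ := by
      intro R hR
      have hRx : ‖x‖ ≤ R := le_trans (le_max_left _ _) hR
      have hR2 : (2 : ℝ) ≤ R := le_trans (le_max_right _ _) hR
      have hR1 : (1 : ℝ) ≤ R := by linarith
      set A : Set (EuclideanSpace ℝ (Fin N)) := {y | 1 ≤ ‖y‖ ∧ ‖y‖ ≤ R} with hAdef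
      have hAeq : A = (fun y : EuclideanSpace ℝ (Fin N) => ‖y‖) ⁻¹' (Set.Icc 1 R) := by
        ext y; simp [hAdef, Set.mem_Icc]
      have hAclosed : IsClosed A := by
        rw [hAeq]; exact IsClosed.preimage continuous_norm isClosed_Icc
      have hAbdd : Bornology.IsBounded A := by
        apply (Metric.isBounded_closedBall (x := (0 : EuclideanSpace ℝ (Fin N))) (r := R)).subset
        intro y hy
        simpa [Metric.mem_closedBall] using hy.2
      have hAcompact : IsCompact A := Metric.isCompact_of_isClosed_isBounded hAclosed hAbdd
      have hxA : x ∈ A := ⟨hx, hRx⟩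
      set hfun : EuclideanSpace ℝ (Fin N) → ℝ := fun y => w y - c * FF m k y with hfundef
      have hFcontOn : ContinuousOn hfun A := by
        intro y hy
        have hd := (hasFDerivAt_FF m k (hq0 y hy.1)).differentiableAt.continuousAt
        exact (hcont.continuousAt.sub (continuousAt_const.mul hd)).continuousWithinAt
      obtain ⟨x0, hx0A, hx0min⟩ := hAcompact.exists_isMinOn ⟨x, hxA⟩ hFcontOn
      have hphiR0 : 0 < phi m k R := phi_pos m k (by linarith)
      have hFFx0 : FF m k x0 = phi m k ‖x0‖ := FF_val m k x0
      have hmain : -(c * phi m k R) ≤ hfun x0 := by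
        by_cases hb1 : ‖x0‖ = 1
        · have hx0sphere : x0 ∈ Metric.sphere (0 : EuclideanSpace ℝ (Fin N)) 1 := by
            simpa [mem_sphere_zero_iff_norm] using hb1
          have hwx0 : w x1 ≤ w x0 := hx1min hx0sphere
          have : hfun x0 = w x0 - c * phi m k 1 := by rw [hfundef]; simp [hFFx0, hb1]
          rw [this, hcphi1]
          nlinarith
        · by_cases hb2 : ‖x0‖ = R
          · have : hfun x0 = w x0 - c * phi m k R := by rw [hfundef]; simp [hFFx0, hb2]
            rw [this]
            have := hpos x0
            linarith
          · -- interior point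
            have hI1 : 1 < ‖x0‖ := lt_of_le_of_ne hx0A.1 (Ne.symm hb1)
            have hI2 : ‖x0‖ < R := lt_of_le_of_ne hx0A.2 hb2
            have hUopen : IsOpen {y : EuclideanSpace ℝ (Fin N) | 1 < ‖y‖ ∧ ‖y‖ < R} :=
              (isOpen_lt continuous_const continuous_norm).inter
                (isOpen_lt continuous_norm continuous_const)
            have hnhds : A ∈ nhds x0 := by
              apply Filter.mem_of_superset (hUopen.mem_nhds ⟨hI1, hI2⟩)
              intro y hy; exact ⟨hy.1.le, hy.2.le⟩
            have hloc : IsLocalMin hfun x0 := hx0min.isLocalMin hnhds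
            have hq0x0 : 0 < qq x0 := hq0 x0 hx0A.1
            -- per-direction second derivative inequality
            have hdir : ∀ i : Fin N,
                0 ≤ fderiv ℝ (fun y => fderiv ℝ w y (EuclideanSpace.single i 1)) x0
                      (EuclideanSpace.single i 1)
                  - c * (((ggd m k (qq x0)) • ((2:ℝ) • (EuclideanSpace.proj i :
                        EuclideanSpace ℝ (Fin N) →L[ℝ] ℝ))
                      + (2 * x0 i) • (ggdd m k (qq x0) • LL x0)) (EuclideanSpace.single i 1)) := by
              intro i
              set v : EuclideanSpace ℝ (Fin N) := EuclideanSpace.single i 1 with hvdef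
              set ℓ : ℝ → EuclideanSpace ℝ (Fin N) := fun t => x0 + t • v with hldef
              have hℓ0 : ℓ 0 = x0 := by simp [hldef]
              have hℓd : ∀ t : ℝ, HasDerivAt ℓ v t := by
                intro t
                have := ((hasDerivAt_id t).smul_const v).const_add x0
                simpa [hldef] using this
              have hℓc : Continuous ℓ := by
                apply continuous_const.add (continuous_id.smul continuous_const)
              have hdifw : Differentiable ℝ w := hw.differentiable (by norm_num)
              set u : ℝ → ℝ := fun t => hfun (ℓ t) with hudef
              set u' : ℝ → ℝ := fun t => fderiv ℝ w (ℓ t) v - c * Phi m k i (ℓ t) with hu'def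
              -- u is a local min at 0
              have hlocu : IsLocalMin u 0 := by
                have htend : Filter.Tendsto ℓ (nhds 0) (nhds x0) := by
                  rw [← hℓ0]; exact hℓc.continuousAt
                have hev := htend.eventually hloc
                refine Filter.Eventually.mono hev ?_
                intro t ht
                simpa [hudef, hℓ0] using ht
              -- first derivative eventually
              have hud : ∀ᶠ t in nhds 0, HasDerivAt u (u' t) t := by
                have hqopen : IsOpen {y : EuclideanSpace ℝ (Fin N) | 0 < qq y} := by
                  have : Continuous (qq (N := N)) := by
                    have : (qq (N := N)) = fun y => ‖y‖ ^ 2 := funext qq_eq_norm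
                    rw [this]; continuity
                  exact isOpen_lt continuous_const this
                have htend : Filter.Tendsto ℓ (nhds 0) (nhds x0) := by
                  rw [← hℓ0]; exact hℓc.continuousAt
                have hev : ∀ᶠ t in nhds 0, 0 < qq (ℓ t) :=
                  htend.eventually (hqopen.mem_nhds hq0x0)
                refine Filter.Eventually.mono hev ?_
                intro t ht
                have h1 : HasDerivAt (fun s => w (ℓ s)) (fderiv ℝ w (ℓ t) v) t :=
                  ((hdifw (ℓ t)).hasFDerivAt).comp_hasDerivAt t (hℓd t)
                have h2 : HasDerivAt (fun s => FF m k (ℓ s)) (Phi m k i (ℓ t)) t := by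
                  have := (hasFDerivAt_FF m k ht).comp_hasDerivAt t (hℓd t)
                  refine this.congr_deriv ?_
                  unfold Phi
                  rw [hvdef]
                  simp [LL_single]
                exact h1.sub (h2.const_mul c)
              -- second derivative at 0
              have hW1 : DifferentiableAt ℝ
                  (fun y => fderiv ℝ w y (EuclideanSpace.single i 1)) x0 :=
                (((hw.fderiv_right (m := 1) (by norm_num)).clm_apply contDiff_const).differentiable
                  (by norm_num)) x0
              have h2w : HasDerivAt (fun t => fderiv ℝ w (ℓ t) v)
                  (fderiv ℝ (fun y => fderiv ℝ w y (EuclideanSpace.single i 1)) x0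
                    (EuclideanSpace.single i 1)) 0 := by
                have h := hW1.hasFDerivAt
                rw [← hℓ0] at h
                have := h.comp_hasDerivAt 0 (hℓd 0)
                rw [hℓ0] at this
                simpa [hvdef, Function.comp_def] using this
              have h2F : HasDerivAt (fun t => Phi m k i (ℓ t))
                  ((((ggd m k (qq x0)) • ((2:ℝ) • (EuclideanSpace.proj i :
                        EuclideanSpace ℝ (Fin N) →L[ℝ] ℝ))
                      + (2 * x0 i) • (ggdd m k (qq x0) • LL x0)) (EuclideanSpace.single i 1))) 0 := by
                have h := hasFDerivAt_Phi m k i hq0x0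
                rw [← hℓ0] at h
                have := h.comp_hasDerivAt 0 (hℓd 0)
                rw [hℓ0] at this
                simpa [hvdef, Function.comp_def] using this
              have hu'd : HasDerivAt u'
                  (fderiv ℝ (fun y => fderiv ℝ w y (EuclideanSpace.single i 1)) x0
                      (EuclideanSpace.single i 1)
                    - c * (((ggd m k (qq x0)) • ((2:ℝ) • (EuclideanSpace.proj i :
                        EuclideanSpace ℝ (Fin N) →L[ℝ] ℝ))
                      + (2 * x0 i) • (ggdd m k (qq x0) • LL x0)) (EuclideanSpace.single i 1))) 0 :=
                h2w.sub (h2F.const_mul c)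
              exact secondDeriv_nonneg_of_isLocalMin hlocu hud hu'd
            -- sum over directions
            have hsum : c * (phidd m k ‖x0‖ + ((N:ℝ) - 1) * phid m k ‖x0‖ / ‖x0‖)
                ≤ ∑ i : Fin N, fderiv ℝ (fun y => fderiv ℝ w y (EuclideanSpace.single i 1)) x0
                    (EuclideanSpace.single i 1) := by
              rw [← sum_B m k hx0A.1, Finset.mul_sum]
              apply Finset.sum_le_sum
              intro i _
              have := hdir i
              linarith
            have hlap := hsuper x0 hx0A.1
            have hkey := key_ineq m k hN hx0A.1 hε hmdef hkdef
            have hwge : c * phi m k ‖x0‖ ≤ w x0 := by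
              have h1 : c * (ε * phi m k ‖x0‖) ≤ ε * w x0 := by
                calc c * (ε * phi m k ‖x0‖)
                    ≤ c * (phidd m k ‖x0‖ + ((N:ℝ) - 1) * phid m k ‖x0‖ / ‖x0‖) := by
                      apply mul_le_mul_of_nonneg_left hkey hc0.le
                  _ ≤ ∑ i : Fin N, fderiv ℝ (fun y => fderiv ℝ w y (EuclideanSpace.single i 1)) x0
                        (EuclideanSpace.single i 1) := hsum
                  _ ≤ ε * w x0 := by linarith
              have h2 : ε * (c * phi m k ‖x0‖) ≤ ε * w x0 := by linarith [h1]
              exact le_of_mul_le_mul_left (by linarith [h2]) hε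
            have : 0 ≤ hfun x0 := by rw [hfundef]; simp [hFFx0]; linarith
            nlinarith
      have hhx : hfun x0 ≤ hfun x := hx0min hxA
      have : hfun x = w x - c * phi m k ‖x‖ := by rw [hfundef]; simp [FF_val]
      linarith [hhx, hmain]
    -- pass to the limit R → ∞
    have hphilim : Filter.Tendsto (fun R : ℝ => phi m k R) Filter.atTop (nhds 0) := by
      apply squeeze_zero' (f := fun R : ℝ => phi m k R) (t₀ := Filter.atTop)
        (g := fun R : ℝ => R ^ (-m))
      · filter_upwards [Filter.eventually_ge_atTop (1:ℝ)] with R hR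
        exact (phi_pos m k (by linarith)).le
      · filter_upwards [Filter.eventually_ge_atTop (1:ℝ)] with R hR
        unfold phi
        have h1 : Real.exp (-(k * R)) ≤ 1 := by
          rw [Real.exp_le_one_iff]
          nlinarith
        have h2 : (0:ℝ) ≤ R ^ (-m) := Real.rpow_nonneg (by linarith) _
        nlinarith
      · exact tendsto_rpow_neg_atTop hm0
    have hlim : Filter.Tendsto (fun R : ℝ => -(c * phi m k R)) Filter.atTop (nhds 0) := by
      have := (hphilim.const_mul c).neg
      simpa using this
    have hfinal : (0:ℝ) ≤ w x - c * phi m k ‖x‖ := by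
      apply le_of_tendsto hlim
      filter_upwards [Filter.eventually_ge_atTop (max ‖x‖ 2)] with R hR
      exact claim R hR
    linarith
  refine ⟨c, hc0, ?_⟩
  intro x hx
  have := key x hx
  have heq : c * ‖x‖ ^ (-((N : ℝ) - 2)) * Real.exp (-(Real.sqrt ε * ‖x‖))
      = c * phi m k ‖x‖ := by
    unfold phi
    rw [← hmdef, ← hkdef]
    ring
  rw [heq]
  exact this
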